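/- Let G' be a finite directed graph with nonnegative edge weights containing a directed path P₂ of total length 0 and a sequence P₁ of distinct vertices disjoint from P₂ equipped with a linear order ≤_{P₁}, such that no vertex of P₁ has an outgoing edge in G' and every edge of G' whose head lies on P₂ is an edge of P₂. Assume the crossing hypothesis: whenever W is a walk in G' from a vertex b of P₂ to a vertex p of P₁ and W' is a walk in G' from a vertex b' of P₂ to a vertex p' of P₁ with b' <_{P₂} b and p' <_{P₁} p, the walks W and W' share a vertex. Let β > 0, write v_f = dfirst_{G'}(v,P₁,β) when it exists, and let B be the set of maximal pairs (v, v_f), i.e., those with v_f defined and no u >_{P₂} v with u_f defined and u_f ≤_{P₁} v_f. Suppose B is nonempty, let b* be the ≤_{P₂}-greatest first coordinate of a pair in B, and let v* be the ≤_{P₁}-least second coordinate of a pair in B. Then for every vertex b of P₂ with b ≤_{P₂} b*: b_f is defined, v* ≤_{P₁} b_f, and some walk in G' from b to v* has length at most 2β. -/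

import Mathlib

/-- A walk in the directed graph with edge relation `E`: a nonempty list of vertices
starting at `u`, ending at `v`, with every consecutive pair an edge. -/
def IsWalk {V : Type*} (E : V → V → Prop) (l : List V) (u v : V) : Prop :=
  l ≠ [] ∧ l.head? = some u ∧ l.getLast? = some v ∧ l.Chain' E

/-- The length of a walk: the sum of the weights of its consecutive pairs. -/
def walkLen {V : Type*} (w : V → V → ℝ) (l : List V) : ℝ :=
  ((l.zip l.tail).map fun q => w q.1 q.2).sum

/-- `b` is `dfirst_G(v,Q,β)`: the `≤_Q`-least vertex of the ordered vertex list `q`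
reachable from `v` by a walk of length at most `β`. -/
def IsDFirst {V : Type*} [DecidableEq V] (E : V → V → Prop) (w : V → V → ℝ)
    (v : V) (q : List V) (β : ℝ) (b : V) : Prop :=
  b ∈ q ∧ (∃ l, IsWalk E l v b ∧ walkLen w l ≤ β) ∧
    ∀ c ∈ q, (∃ l, IsWalk E l v c ∧ walkLen w l ≤ β) → q.idxOf b ≤ q.idxOf c

/-- `(v, vf)` is a maximal pair: `vf = dfirst(v,P₁,β)` and there is no `u` strictly
later than `v` on `P₂` with `u_f` defined and `u_f ≤_{P₁} vf`. -/
def MaximalPair {V : Type*} [DecidableEq V] (E : V → V → Prop) (w : V → V → ℝ)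
    (p₂ p₁ : List V) (β : ℝ) (v vf : V) : Prop :=
  v ∈ p₂ ∧ IsDFirst E w v p₁ β vf ∧
    ¬ ∃ u uf, u ∈ p₂ ∧ p₂.idxOf v < p₂.idxOf u ∧
      IsDFirst E w u p₁ β uf ∧ p₁.idxOf uf ≤ p₁.idxOf vf

section helpers
variable {V : Type*} {E : V → V → Prop} {w : V → V → ℝ}

lemma walkLen_nil : walkLen w ([] : List V) = 0 := by simp [walkLen]

lemma walkLen_single (a : V) : walkLen w [a] = 0 := by simp [walkLen]

lemma walkLen_cons_cons (a b : V) (l : List V) :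
    walkLen w (a :: b :: l) = w a b + walkLen w (b :: l) := by
  simp [walkLen]

lemma walkLen_nonneg (hw : ∀ x y, 0 ≤ w x y) (l : List V) : 0 ≤ walkLen w l := by
  apply List.sum_nonneg
  intro r hr
  simp only [List.mem_map] at hr
  obtain ⟨q, -, rfl⟩ := hr
  exact hw _ _

lemma isWalk_singleton (u : V) : IsWalk E [u] u u := by
  refine ⟨by simp, rfl, rfl, List.isChain_singleton _⟩

lemma walk_append {x v : V} {l₂ : List V} (h₂ : IsWalk E l₂ x v) :
    ∀ (l₁ : List V) (u : V), IsWalk E l₁ u x →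
    ∃ l, IsWalk E l u v ∧ walkLen w l = walkLen w l₁ + walkLen w l₂ := by
  intro l₁
  induction l₁ with
  | nil => intro u h₁; exact absurd rfl h₁.1
  | cons a t ih =>
    intro u h₁
    obtain ⟨-, h1, h2, h3⟩ := h₁
    simp only [List.head?_cons, Option.some.injEq] at h1
    subst h1
    cases t with
    | nil =>
      simp only [List.getLast?_singleton, Option.some.injEq] at h2
      subst h2
      exact ⟨l₂, h₂, by rw [walkLen_single]; ring⟩
    | cons b t' =>
      have hbt : IsWalk E (b :: t') b x := by
        refine ⟨by simp, rfl, by rw [← h2]; simp, h3.tail⟩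
      obtain ⟨l, hl, hlen⟩ := ih b hbt
      obtain ⟨hlne, hlh, hll, hlc⟩ := hl
      cases l with
      | nil => exact absurd rfl hlne
      | cons c t'' =>
        simp only [List.head?_cons, Option.some.injEq] at hlh
        subst hlh
        refine ⟨a :: c :: t'', ⟨by simp, rfl, by rw [← hll]; simp, ?_⟩, ?_⟩
        · exact List.isChain_cons_cons.2 ⟨(List.isChain_cons_cons.1 h3).1, hlc⟩
        · rw [walkLen_cons_cons, walkLen_cons_cons, hlen]; ring

lemma walk_drop (hw : ∀ x y, 0 ≤ w x y) :
    ∀ (l : List V) (u v : V), IsWalk E l u v → ∀ (i : ℕ) (hi : i < l.length),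
    IsWalk E (l.drop i) l[i] v ∧ walkLen w (l.drop i) ≤ walkLen w l := by
  intro l
  induction l with
  | nil => intro u v h; exact absurd rfl h.1
  | cons a t ih =>
    intro u v h i hi
    obtain ⟨-, h1, h2, h3⟩ := h
    cases i with
    | zero =>
      simp only [List.head?_cons, Option.some.injEq] at h1
      subst h1
      exact ⟨⟨by simp, by simp, h2, h3⟩, le_refl _⟩
    | succ j =>
      cases t with
      | nil => simp at hi
      | cons b t' =>
        have hbt : IsWalk E (b :: t') b v := ⟨by simp, rfl, by rw [← h2]; simp, h3.tail⟩
        have := ih b v hbt j (by simpa using Nat.lt_of_succ_lt_succ hi)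
        refine ⟨by simpa using this.1, ?_⟩
        calc walkLen w ((a :: b :: t').drop (j+1)) = walkLen w ((b :: t').drop j) := by simp
        _ ≤ walkLen w (b :: t') := this.2
        _ ≤ walkLen w (a :: b :: t') := by rw [walkLen_cons_cons]; linarith [hw a b]

lemma walk_take (hw : ∀ x y, 0 ≤ w x y) :
    ∀ (l : List V) (u v : V), IsWalk E l u v → ∀ (i : ℕ) (hi : i < l.length),
    IsWalk E (l.take (i+1)) u l[i] ∧ walkLen w (l.take (i+1)) ≤ walkLen w l := by
  intro l
  induction l with
  | nil => intro u v h; exact absurd rfl h.1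
  | cons a t ih =>
    intro u v h i hi
    obtain ⟨-, h1, h2, h3⟩ := h
    simp only [List.head?_cons, Option.some.injEq] at h1
    subst h1
    cases i with
    | zero =>
      refine ⟨?_, ?_⟩
      · simpa using isWalk_singleton (E := E) a
      · rw [show (a :: t).take 1 = [a] by simp, walkLen_single]
        exact walkLen_nonneg hw _
    | succ j =>
      cases t with
      | nil => simp at hi
      | cons b t' =>
        have hbt : IsWalk E (b :: t') b v := ⟨by simp, rfl, by rw [← h2]; simp, h3.tail⟩
        obtain ⟨⟨hne, hh, hl, hc⟩, hlen⟩ := ih b v hbt j (by simpa using Nat.lt_of_succ_lt_succ hi)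
        have htake : (a :: b :: t').take (j+1+1) = a :: (b :: t').take (j+1) := by simp
        have hhead : ((b :: t').take (j+1)).head? = some b := by
          rw [hh]
        refine ⟨⟨by simp [htake], by simp [htake], ?_, ?_⟩, ?_⟩
        · rw [htake]
          rw [List.getLast?_cons, hl]
          simp
        · rw [htake]; show List.IsChain E _; rw [List.isChain_cons]
          refine ⟨?_, hc⟩
          intro y hy
          rw [hhead] at hy
          cases hy
          exact (List.isChain_cons_cons.1 h3).1
        · rw [htake]
          have : (b :: t').take (j+1) = b :: t'.take j := by simp
          rw [this, walkLen_cons_cons, ← this, walkLen_cons_cons]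
          have : walkLen w (b :: t'.take j) = walkLen w ((b :: t').take (j+1)) := by rw [this]
          linarith

end helpers

section derived
variable {V : Type*} {E : V → V → Prop} {w : V → V → ℝ}

lemma walk_to_mem [DecidableEq V] (hw : ∀ x y, 0 ≤ w x y) {l : List V} {u v x : V}
    (h : IsWalk E l u v) (hx : x ∈ l) :
    ∃ l', IsWalk E l' u x ∧ walkLen w l' ≤ walkLen w l := by
  have hi : l.idxOf x < l.length := List.idxOf_lt_length_iff.2 hx
  have := walk_take hw l u v h (l.idxOf x) hi
  rw [List.getElem_idxOf hi] at this
  exact ⟨_, this.1, this.2⟩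

lemma walk_from_mem [DecidableEq V] (hw : ∀ x y, 0 ≤ w x y) {l : List V} {u v x : V}
    (h : IsWalk E l u v) (hx : x ∈ l) :
    ∃ l', IsWalk E l' x v ∧ walkLen w l' ≤ walkLen w l := by
  have hi : l.idxOf x < l.length := List.idxOf_lt_length_iff.2 hx
  have := walk_drop hw l u v h (l.idxOf x) hi
  rw [List.getElem_idxOf hi] at this
  exact ⟨_, this.1, this.2⟩

/-- Walk along a zero-length chain from an earlier to a later vertex. -/
lemma walk_segment [DecidableEq V] (hw : ∀ x y, 0 ≤ w x y) {p : List V}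
    (hch : p.Chain' E) (hlen : walkLen w p = 0) {b v : V} (hb : b ∈ p) (hv : v ∈ p)
    (hle : p.idxOf b ≤ p.idxOf v) :
    ∃ l, IsWalk E l b v ∧ walkLen w l ≤ 0 := by
  have hne : p ≠ [] := List.ne_nil_of_mem hb
  have hpwalk : IsWalk E p (p.head hne) (p.getLast hne) :=
    ⟨hne, List.head?_eq_head hne, List.getLast?_eq_getLast hne, hch⟩
  have hib : p.idxOf b < p.length := List.idxOf_lt_length_iff.2 hb
  have hiv : p.idxOf v < p.length := List.idxOf_lt_length_iff.2 hv
  obtain ⟨hdw, hdlen⟩ := walk_drop hw p _ _ hpwalk (p.idxOf b) hib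
  rw [List.getElem_idxOf hib] at hdw
  set d := p.drop (p.idxOf b) with hd
  have hj : p.idxOf v - p.idxOf b < d.length := by
    rw [hd, List.length_drop]; omega
  have hdj : d[p.idxOf v - p.idxOf b]'hj = v := by
    have h1 : d[p.idxOf v - p.idxOf b]'hj
        = p[p.idxOf b + (p.idxOf v - p.idxOf b)]'(by omega) := List.getElem_drop
    rw [h1]
    have h2 : p.idxOf b + (p.idxOf v - p.idxOf b) = p.idxOf v := by omega
    simp only [h2]
    exact List.getElem_idxOf hiv
  obtain ⟨htw, htlen⟩ := walk_take hw d _ _ hdw _ hj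
  rw [hdj] at htw
  exact ⟨_, htw, by rw [hlen] at hdlen; linarith⟩

end derived

section top
variable {V : Type*} [DecidableEq V] {E : V → V → Prop} {w : V → V → ℝ}

lemma dfirst_exists {b : V} {p₁ : List V} {β : ℝ}
    (h : ∃ c ∈ p₁, ∃ l, IsWalk E l b c ∧ walkLen w l ≤ β) :
    ∃ bf, IsDFirst E w b p₁ β bf := by
  classical
  obtain ⟨c₀, hc₀, hl₀⟩ := h
  have hn : ∃ n, ∃ c ∈ p₁, p₁.idxOf c = n ∧ ∃ l, IsWalk E l b c ∧ walkLen w l ≤ β :=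
    ⟨p₁.idxOf c₀, c₀, hc₀, rfl, hl₀⟩
  obtain ⟨c, hc, hcn, hl⟩ := Nat.find_spec hn
  refine ⟨c, hc, hl, ?_⟩
  intro c' hc' hl'
  have := Nat.find_min' hn (m := p₁.idxOf c') ⟨c', hc', rfl, hl'⟩
  omega

lemma maximal_exists {b bf : V} {p₂ p₁ : List V} {β : ℝ}
    (hb : b ∈ p₂) (hbf : IsDFirst E w b p₁ β bf) :
    ∃ u uf, MaximalPair E w p₂ p₁ β u uf ∧ p₁.idxOf uf ≤ p₁.idxOf bf := by
  classical
  set P : ℕ → Prop := fun n => ∃ u ∈ p₂, p₂.idxOf u = n ∧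
    ∃ uf, IsDFirst E w u p₁ β uf ∧ p₁.idxOf uf ≤ p₁.idxOf bf with hP
  have hPb : P (p₂.idxOf b) := ⟨b, hb, rfl, bf, hbf, le_refl _⟩
  have hble : p₂.idxOf b ≤ p₂.length := le_of_lt (List.idxOf_lt_length_iff.2 hb)
  have hspec : P (Nat.findGreatest P p₂.length) := Nat.findGreatest_spec hble hPb
  obtain ⟨u, hu, hun, uf, huf, hufle⟩ := hspec
  refine ⟨u, uf, ⟨hu, huf, ?_⟩, hufle⟩
  rintro ⟨u', uf', hu', hlt, huf', hule⟩
  have : P (p₂.idxOf u') := ⟨u', hu', rfl, uf', huf', hule.trans hufle⟩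
  have h2 := Nat.le_findGreatest (le_of_lt (List.idxOf_lt_length_iff.2 hu')) this
  omega

end top

/-- With `b*` the `≤_{P₂}`-greatest first coordinate of a maximal pair and
`v*` the `≤_{P₁}`-least second coordinate, every `b ≤_{P₂} b*` has `b_f` defined with
`v* ≤_{P₁} b_f`, and some walk from `b` to `v*` has length at most `2β`. -/
theorem stmt_7 {V : Type*} [Fintype V] [DecidableEq V] (E : V → V → Prop)
    (w : V → V → ℝ) (hw : ∀ x y, 0 ≤ w x y)
    (p₂ p₁ : List V) (hp₂nd : p₂.Nodup) (hp₂ch : p₂.Chain' E)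
    (hp₂len : walkLen w p₂ = 0) (hp₁nd : p₁.Nodup)
    (hdisj : ∀ x ∈ p₁, x ∉ p₂)
    (hnoout : ∀ x ∈ p₁, ∀ y, ¬ E x y)
    (hhead : ∀ x y, E x y → y ∈ p₂ → ∃ i, p₂[i]? = some x ∧ p₂[i+1]? = some y)
    (hcross : ∀ (lw lw' : List V) (b q b' q' : V),
      b ∈ p₂ → q ∈ p₁ → b' ∈ p₂ → q' ∈ p₁ →
      IsWalk E lw b q → IsWalk E lw' b' q' →
      p₂.idxOf b' < p₂.idxOf b → p₁.idxOf q' < p₁.idxOf q →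
      ∃ x, x ∈ lw ∧ x ∈ lw')
    (β : ℝ) (hβ : 0 < β)
    (bstar vstar : V)
    (hbstar₁ : ∃ vf, MaximalPair E w p₂ p₁ β bstar vf)
    (hbstar₂ : ∀ v vf, MaximalPair E w p₂ p₁ β v vf → p₂.idxOf v ≤ p₂.idxOf bstar)
    (hvstar₁ : ∃ v, MaximalPair E w p₂ p₁ β v vstar)
    (hvstar₂ : ∀ v vf, MaximalPair E w p₂ p₁ β v vf → p₁.idxOf vstar ≤ p₁.idxOf vf) :
    ∀ b ∈ p₂, p₂.idxOf b ≤ p₂.idxOf bstar →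
      (∃ bf, IsDFirst E w b p₁ β bf ∧ p₁.idxOf vstar ≤ p₁.idxOf bf) ∧
      ∃ l, IsWalk E l b vstar ∧ walkLen w l ≤ 2 * β := by
  classical
  intro b hb hble
  obtain ⟨vf0, hbsmem, hdf0, -⟩ := hbstar₁
  obtain ⟨hvf0p₁, ⟨l0, hl0, hl0len⟩, -⟩ := hdf0
  -- walk from b to bstar of length ≤ 0
  obtain ⟨ls, hls, hlslen⟩ := walk_segment hw hp₂ch hp₂len hb hbsmem hble
  -- concatenate: walk from b to vf0 of length ≤ β
  obtain ⟨lc, hlc, hlclen⟩ := walk_append hl0 ls b hls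
  -- dfirst of b exists
  obtain ⟨bf, hbf⟩ := dfirst_exists (β := β) ⟨vf0, hvf0p₁, lc, hlc, by linarith⟩
  obtain ⟨hbfp₁, ⟨lb, hlb, hlblen⟩, -⟩ := id hbf
  -- vstar ≤ bf via a maximal pair above (b, bf)
  obtain ⟨u, uf, hmpu, hufbf⟩ := maximal_exists hb hbf
  have hvsbf : p₁.idxOf vstar ≤ p₁.idxOf bf := (hvstar₂ u uf hmpu).trans hufbf
  refine ⟨⟨bf, hbf, hvsbf⟩, ?_⟩
  -- part 2: walk from b to vstar of length ≤ 2β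
  obtain ⟨v, hvmem, hdfv, -⟩ := hvstar₁
  obtain ⟨hvsp₁, ⟨lv, hlv, hlvlen⟩, -⟩ := hdfv
  by_cases hcase : p₂.idxOf b ≤ p₂.idxOf v
  · -- b before v on P₂: segment b→v then the walk v→vstar
    obtain ⟨ls', hls', hls'len⟩ := walk_segment hw hp₂ch hp₂len hb hvmem hcase
    obtain ⟨l, hl, hlen⟩ := walk_append hlv ls' b hls'
    exact ⟨l, hl, by linarith⟩
  · push_neg at hcase
    by_cases hlt : p₁.idxOf vstar < p₁.idxOf bf
    · -- crossing
      obtain ⟨x, hx1, hx2⟩ := hcross lb lv b bf v vstar hb hbfp₁ hvmem hvsp₁ hlb hlv hcase hlt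
      obtain ⟨l₁, hl₁, hl₁len⟩ := walk_to_mem hw hlb hx1
      obtain ⟨l₂, hl₂, hl₂len⟩ := walk_from_mem hw hlv hx2
      obtain ⟨l, hl, hlen⟩ := walk_append hl₂ l₁ b hl₁
      exact ⟨l, hl, by linarith⟩
    · -- bf = vstar
      have hEq : p₁.idxOf vstar = p₁.idxOf bf := le_antisymm hvsbf (not_lt.1 hlt)
      have hbv : bf = vstar := by
        have h1 := List.getElem_idxOf (List.idxOf_lt_length_iff.2 hbfp₁)
        have h2 := List.getElem_idxOf (List.idxOf_lt_length_iff.2 hvsp₁)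
        rw [← h1, ← h2]
        simp only [hEq]
      exact ⟨lb, hbv ▸ hlb, by linarith⟩
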